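/- For the 6-message unicast instance r_1(1|{2,3,4}), r_2(2|{5}), r_3(3|{1,4}), r_4(4|{1,3}), r_5(5|{2,6}), r_6(6|{4}), no valid index code of length 2 over GF(2) exists; hence the scheme using 3 transmissions is optimal. -/
import Mathlib


/-- The 6-message unicast instance (0-based indices) with side information sets
`S 0 = {1, 2, 3}`, `S 1 = {4}`, `S 2 = {0, 3}`, `S 3 = {0, 2}`, `S 4 = {1, 5}`,
`S 5 = {3}`. -/
def exS : Fin 6 → Finset (Fin 6) :=
  ![{1, 2, 3}, {4}, {0, 3}, {0, 2}, {1, 5}, {3}]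

/-- Embedding of 3 free bits on coordinates 1, 2, 5. -/
def emb3 (v : Fin 3 → ZMod 2) : Fin 6 → ZMod 2 :=
  ![0, v 0, v 1, 0, 0, v 2]

lemma emb3_side1 (v : Fin 3 → ZMod 2) :
    (fun m : {m : Fin 6 // m ∈ exS 1} => emb3 v m.1) = fun _ => 0 := by
  funext m
  obtain ⟨m, hm⟩ := m
  fin_cases m <;> first | exact absurd hm (by decide) | simp [emb3]

lemma emb3_side2 (v : Fin 3 → ZMod 2) :
    (fun m : {m : Fin 6 // m ∈ exS 2} => emb3 v m.1) = fun _ => 0 := by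
  funext m
  obtain ⟨m, hm⟩ := m
  fin_cases m <;> first | exact absurd hm (by decide) | simp [emb3]

lemma emb3_side5 (v : Fin 3 → ZMod 2) :
    (fun m : {m : Fin 6 // m ∈ exS 5} => emb3 v m.1) = fun _ => 0 := by
  funext m
  obtain ⟨m, hm⟩ := m
  fin_cases m <;> first | exact absurd hm (by decide) | simp [emb3]

/-- For this instance no valid index code of length 2 over GF(2) exists (hence the
scheme using 3 transmissions is optimal). -/
theorem six_message_example_no_length_two_code :
    ¬ ∃ f : (Fin 6 → ZMod 2) → (Fin 2 → ZMod 2),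
      ∀ i : Fin 6,
        ∃ g : (Fin 2 → ZMod 2) → ({m : Fin 6 // m ∈ exS i} → ZMod 2) → ZMod 2,
          ∀ w : Fin 6 → ZMod 2, g (f w) (fun m => w m.1) = w i := by
  rintro ⟨f, hf⟩
  obtain ⟨g1, hg1⟩ := hf 1
  obtain ⟨g2, hg2⟩ := hf 2
  obtain ⟨g5, hg5⟩ := hf 5
  have hinj : Function.Injective (fun v => f (emb3 v)) := by
    intro v v' h
    simp only at h
    have e1 : v 0 = v' 0 := by
      have a := hg1 (emb3 v); have b := hg1 (emb3 v')
      rw [emb3_side1] at a b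
      rw [h] at a
      rw [a] at b
      simpa [emb3] using b
    have e2 : v 1 = v' 1 := by
      have a := hg2 (emb3 v); have b := hg2 (emb3 v')
      rw [emb3_side2] at a b
      rw [h] at a
      rw [a] at b
      simpa [emb3] using b
    have e5 : v 2 = v' 2 := by
      have a := hg5 (emb3 v); have b := hg5 (emb3 v')
      rw [emb3_side5] at a b
      rw [h] at a
      rw [a] at b
      simpa [emb3] using b
    funext i
    fin_cases i <;> assumption
  have hcard := Fintype.card_le_of_injective _ hinj
  simp [Fintype.card_fun] at hcard
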